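/- For every m < 1, the second derivative of the logarithm of the complete elliptic integral of the first kind is strictly positive: (ln K)''(m) > 0; that is, ln K is strictly convex on (-∞, 1). -/

import Mathlib

open MeasureTheory Real Set intervalIntegral Metric

namespace EllK

/-- weight `(1-ζ²)^{-1/2}`. -/
noncomputable def w (ζ : ℝ) : ℝ := (Real.sqrt (1 - ζ ^ 2))⁻¹

lemma w_nonneg (ζ : ℝ) : 0 ≤ w ζ := inv_nonneg.2 (Real.sqrt_nonneg _)

lemma w_pos {ζ : ℝ} (hζ : ζ ∈ Set.Ioo (0:ℝ) 1) : 0 < w ζ := by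
  have : 0 < 1 - ζ ^ 2 := by nlinarith [hζ.1, hζ.2]
  exact inv_pos.2 (Real.sqrt_pos.2 this)

lemma w_measurable : Measurable w :=
  ((Real.continuous_sqrt.comp (by continuity)).measurable).inv

/-- key positivity: `1 - x ζ² ≥ min 1 (1-b)` for `x ≤ b < 1`, `ζ ∈ (0,1]`. -/
lemma u_ge {b x ζ : ℝ} (hb : b < 1) (hx : x ≤ b) (hζ : ζ ∈ Set.Ioc (0:ℝ) 1) :
    min 1 (1 - b) ≤ 1 - x * ζ ^ 2 := by
  have hζ2 : ζ ^ 2 ≤ 1 := by nlinarith [hζ.1, hζ.2]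
  have hζ2' : 0 ≤ ζ ^ 2 := sq_nonneg ζ
  rcases le_or_gt x 0 with h | h
  · have : x * ζ ^ 2 ≤ 0 := mul_nonpos_of_nonpos_of_nonneg h hζ2'
    calc min 1 (1 - b) ≤ 1 := min_le_left _ _
      _ ≤ 1 - x * ζ ^ 2 := by linarith
  · have : x * ζ ^ 2 ≤ b := by nlinarith
    calc min 1 (1 - b) ≤ 1 - b := min_le_right _ _
      _ ≤ 1 - x * ζ ^ 2 := by linarith

lemma u_pos {x ζ : ℝ} (hx : x < 1) (hζ : ζ ∈ Set.Ioc (0:ℝ) 1) :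
    0 < 1 - x * ζ ^ 2 :=
  lt_of_lt_of_le (lt_min one_pos (by linarith)) (u_ge hx le_rfl hζ)

/-- `w` is interval integrable on `[0,1]`. -/
lemma intervalIntegrable_w : IntervalIntegrable w volume 0 1 := by
  have h1 : IntervalIntegrable (fun x : ℝ => x ^ (-(1/2) : ℝ)) volume 0 1 :=
    intervalIntegrable_rpow' (by norm_num)
  have h2 : IntervalIntegrable (fun x : ℝ => (1 - x) ^ (-(1/2) : ℝ)) volume 0 1 := by
    have := (h1.comp_sub_left 1).symm
    simpa using this
  rw [intervalIntegrable_iff_integrableOn_Ioc_of_le (by norm_num)] at h2 ⊢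
  refine h2.mono' w_measurable.aestronglyMeasurable ?_
  filter_upwards [ae_restrict_mem measurableSet_Ioc] with ζ hζ
  rw [Real.norm_eq_abs, abs_of_nonneg (w_nonneg ζ)]
  rcases eq_or_lt_of_le hζ.2 with h1' | h1'
  · subst h1'
    simp [w, Real.zero_rpow (by norm_num : (-(1/2):ℝ) ≠ 0)]
  · have h0 : 0 < 1 - ζ := by linarith
    have hsq : Real.sqrt (1 - ζ) ≤ Real.sqrt (1 - ζ ^ 2) := by
      apply Real.sqrt_le_sqrt; nlinarith [hζ.1]
    have hsp : 0 < Real.sqrt (1 - ζ) := Real.sqrt_pos.2 h0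
    have : w ζ ≤ (Real.sqrt (1 - ζ))⁻¹ := by
      unfold w; exact inv_anti₀ hsp hsq
    calc w ζ ≤ (Real.sqrt (1 - ζ))⁻¹ := this
      _ = (1 - ζ) ^ (-(1/2) : ℝ) := by
          rw [Real.sqrt_eq_rpow, ← Real.rpow_neg h0.le]

/-- master integrability lemma: `w * g` with `g` measurable and bounded on `(0,1]`. -/
lemma intervalIntegrable_w_mul {g : ℝ → ℝ} (hg : Measurable g) {c : ℝ}
    (hbd : ∀ ζ ∈ Set.Ioc (0:ℝ) 1, |g ζ| ≤ c) :
    IntervalIntegrable (fun ζ => w ζ * g ζ) volume 0 1 := by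
  have hcw : IntervalIntegrable (fun ζ => c * w ζ) volume 0 1 :=
    intervalIntegrable_w.const_mul c
  rw [intervalIntegrable_iff_integrableOn_Ioc_of_le (by norm_num)] at hcw ⊢
  refine hcw.mono' ((w_measurable.mul hg).aestronglyMeasurable) ?_
  filter_upwards [ae_restrict_mem measurableSet_Ioc] with ζ hζ
  rw [Real.norm_eq_abs, abs_mul, abs_of_nonneg (w_nonneg ζ)]
  calc w ζ * |g ζ| ≤ w ζ * c := by
        exact mul_le_mul_of_nonneg_left (hbd ζ hζ) (w_nonneg ζ)
    _ = c * w ζ := mul_comm _ _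

noncomputable def f0 (m ζ : ℝ) : ℝ := w ζ * (1 - m * ζ ^ 2) ^ (-(1/2) : ℝ)
noncomputable def f1 (m ζ : ℝ) : ℝ := w ζ * (ζ ^ 2 / 2 * (1 - m * ζ ^ 2) ^ (-(3/2) : ℝ))
noncomputable def f2 (m ζ : ℝ) : ℝ := w ζ * (3 * ζ ^ 4 / 4 * (1 - m * ζ ^ 2) ^ (-(5/2) : ℝ))

noncomputable def A (m : ℝ) : ℝ := ∫ ζ in (0:ℝ)..1, f0 m ζ
noncomputable def B (m : ℝ) : ℝ := ∫ ζ in (0:ℝ)..1, f1 m ζ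
noncomputable def C (m : ℝ) : ℝ := ∫ ζ in (0:ℝ)..1, f2 m ζ

lemma factor_le {m p ζ : ℝ} (hm : m < 1) (hp : p ≤ 0) (hζ : ζ ∈ Set.Ioc (0:ℝ) 1) :
    (1 - m * ζ ^ 2) ^ p ≤ (min 1 (1 - m)) ^ p := by
  have hδ : (0:ℝ) < min 1 (1 - m) := lt_min one_pos (by linarith)
  exact Real.rpow_le_rpow_of_nonpos hδ (u_ge hm le_rfl hζ) hp

lemma intervalIntegrable_f0 {m : ℝ} (hm : m < 1) :
    IntervalIntegrable (f0 m) volume 0 1 := by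
  apply intervalIntegrable_w_mul (by fun_prop) (c := (min 1 (1 - m)) ^ (-(1/2) : ℝ))
  intro ζ hζ
  rw [abs_of_nonneg (Real.rpow_nonneg (u_pos hm hζ).le _)]
  exact factor_le hm (by norm_num) hζ

lemma intervalIntegrable_f1 {m : ℝ} (hm : m < 1) :
    IntervalIntegrable (f1 m) volume 0 1 := by
  apply intervalIntegrable_w_mul (by fun_prop)
    (c := 1/2 * (min 1 (1 - m)) ^ (-(3/2) : ℝ))
  intro ζ hζ
  have hu := u_pos hm hζ
  have h1 : ζ ^ 2 / 2 ≤ 1/2 := by nlinarith [hζ.1, hζ.2]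
  rw [abs_of_nonneg (by positivity)]
  exact mul_le_mul h1 (factor_le hm (by norm_num) hζ)
    (Real.rpow_nonneg hu.le _) (by norm_num)

lemma intervalIntegrable_f2 {m : ℝ} (hm : m < 1) :
    IntervalIntegrable (f2 m) volume 0 1 := by
  apply intervalIntegrable_w_mul (by fun_prop)
    (c := 3/4 * (min 1 (1 - m)) ^ (-(5/2) : ℝ))
  intro ζ hζ
  have hu := u_pos hm hζ
  have h1 : 3 * ζ ^ 4 / 4 ≤ 3/4 := by nlinarith [pow_le_one₀ hζ.1.le hζ.2 (n := 4)]
  rw [abs_of_nonneg (by positivity)]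
  exact mul_le_mul h1 (factor_le hm (by norm_num) hζ)
    (Real.rpow_nonneg hu.le _) (by norm_num)

lemma A_pos {m : ℝ} (hm : m < 1) : 0 < A m := by
  apply intervalIntegral_pos_of_pos_on (intervalIntegrable_f0 hm) _ (by norm_num)
  intro ζ hζ
  have hu := u_pos hm ⟨hζ.1, hζ.2.le⟩
  exact mul_pos (w_pos hζ) (Real.rpow_pos_of_pos hu _)

lemma C_pos {m : ℝ} (hm : m < 1) : 0 < C m := by
  apply intervalIntegral_pos_of_pos_on (intervalIntegrable_f2 hm) _ (by norm_num)
  intro ζ hζ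
  have hu := u_pos hm ⟨hζ.1, hζ.2.le⟩
  have : 0 < 3 * ζ ^ 4 / 4 := by nlinarith [pow_pos hζ.1 4]
  exact mul_pos (w_pos hζ) (mul_pos this (Real.rpow_pos_of_pos hu _))

lemma measurable_f0 (x : ℝ) : Measurable (f0 x) := by unfold f0 w; fun_prop
lemma measurable_f1 (x : ℝ) : Measurable (f1 x) := by unfold f1 w; fun_prop
lemma measurable_f2 (x : ℝ) : Measurable (f2 x) := by unfold f2 w; fun_prop

lemma hasDerivAt_sub_sq {x ζ : ℝ} : HasDerivAt (fun y : ℝ => 1 - y * ζ ^ 2) (-ζ ^ 2) x := by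
  simpa using ((hasDerivAt_id x).mul_const (ζ ^ 2)).const_sub 1

lemma hasDerivAt_inner0 {x ζ : ℝ} (hu : 0 < 1 - x * ζ ^ 2) :
    HasDerivAt (fun y => (1 - y * ζ ^ 2) ^ (-(1/2) : ℝ))
      (ζ ^ 2 / 2 * (1 - x * ζ ^ 2) ^ (-(3/2) : ℝ)) x := by
  have h := hasDerivAt_sub_sq.rpow_const (p := -(1/2)) (Or.inl hu.ne')
  rw [show (-(1/2) : ℝ) - 1 = -(3/2) by norm_num] at h
  convert h using 1; ring

lemma hasDerivAt_inner1 {x ζ : ℝ} (hu : 0 < 1 - x * ζ ^ 2) :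
    HasDerivAt (fun y => (1 - y * ζ ^ 2) ^ (-(3/2) : ℝ))
      (3 / 2 * ζ ^ 2 * (1 - x * ζ ^ 2) ^ (-(5/2) : ℝ)) x := by
  have h := hasDerivAt_sub_sq.rpow_const (p := -(3/2)) (Or.inl hu.ne')
  rw [show (-(3/2) : ℝ) - 1 = -(5/2) by norm_num] at h
  convert h using 1; ring

lemma hasDerivAt_f0 {x ζ : ℝ} (hu : 0 < 1 - x * ζ ^ 2) :
    HasDerivAt (fun y => f0 y ζ) (f1 x ζ) x :=
  (hasDerivAt_inner0 hu).const_mul (w ζ)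

lemma hasDerivAt_f1 {x ζ : ℝ} (hu : 0 < 1 - x * ζ ^ 2) :
    HasDerivAt (fun y => f1 y ζ) (f2 x ζ) x := by
  have h := ((hasDerivAt_inner1 hu).const_mul (ζ ^ 2 / 2)).const_mul (w ζ)
  refine h.congr_deriv ?_
  unfold f2; ring

lemma ball_lt_one {m x : ℝ} (hm : m < 1) (hx : x ∈ Metric.ball m ((1 - m)/2)) :
    x ≤ (1 + m)/2 := by
  rw [Metric.mem_ball, Real.dist_eq, abs_sub_lt_iff] at hx
  linarith [hx.1]

lemma hasDerivAt_A {m : ℝ} (hm : m < 1) : HasDerivAt A (B m) m := by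
  have hε0 : (0:ℝ) < (1 - m)/2 := by linarith
  have hb1 : (1 + m)/2 < 1 := by linarith
  have hδ0 : (0:ℝ) < min 1 (1 - (1 + m)/2) := lt_min one_pos (by linarith)
  have key := intervalIntegral.hasDerivAt_integral_of_dominated_loc_of_deriv_le
    (F := fun x ζ => f0 x ζ) (F' := fun x ζ => f1 x ζ) (a := 0) (b := 1) (x₀ := m)
    (bound := fun ζ => w ζ * (1/2 * (min 1 (1 - (1 + m)/2)) ^ (-(3/2) : ℝ)))
    (μ := volume) (Metric.ball_mem_nhds m hε0)
    (Filter.Eventually.of_forall fun x =>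
      (measurable_f0 x).aestronglyMeasurable)
    (intervalIntegrable_f0 hm)
    ((measurable_f1 m).aestronglyMeasurable)
    ?_ ?_ ?_
  · exact key.2
  · refine Filter.Eventually.of_forall fun t ht x hx => ?_
    rw [Set.uIoc_of_le (by norm_num : (0:ℝ) ≤ 1)] at ht
    have hxb := ball_lt_one hm hx
    have huδ := u_ge hb1 hxb ht
    have hu : 0 < 1 - x * t ^ 2 := lt_of_lt_of_le hδ0 huδ
    have h1 : t ^ 2 / 2 ≤ 1/2 := by nlinarith [ht.1, ht.2]
    show ‖f1 x t‖ ≤ w t * (1/2 * (min 1 (1 - (1 + m)/2)) ^ (-(3/2) : ℝ))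
    unfold f1
    rw [Real.norm_eq_abs, abs_of_nonneg (mul_nonneg (w_nonneg t)
      (mul_nonneg (by positivity) (Real.rpow_nonneg hu.le _)))]
    refine mul_le_mul_of_nonneg_left ?_ (w_nonneg t)
    exact mul_le_mul h1 (Real.rpow_le_rpow_of_nonpos hδ0 huδ (by norm_num))
      (Real.rpow_nonneg hu.le _) (by norm_num)
  · exact intervalIntegrable_w.mul_const _
  · refine Filter.Eventually.of_forall fun t ht x hx => ?_
    rw [Set.uIoc_of_le (by norm_num : (0:ℝ) ≤ 1)] at ht
    have hxb := ball_lt_one hm hx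
    have hu : 0 < 1 - x * t ^ 2 :=
      lt_of_lt_of_le hδ0 (u_ge hb1 hxb ht)
    exact hasDerivAt_f0 hu

lemma hasDerivAt_B {m : ℝ} (hm : m < 1) : HasDerivAt B (C m) m := by
  have hε0 : (0:ℝ) < (1 - m)/2 := by linarith
  have hb1 : (1 + m)/2 < 1 := by linarith
  have hδ0 : (0:ℝ) < min 1 (1 - (1 + m)/2) := lt_min one_pos (by linarith)
  have key := intervalIntegral.hasDerivAt_integral_of_dominated_loc_of_deriv_le
    (F := fun x ζ => f1 x ζ) (F' := fun x ζ => f2 x ζ) (a := 0) (b := 1) (x₀ := m)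
    (bound := fun ζ => w ζ * (3/4 * (min 1 (1 - (1 + m)/2)) ^ (-(5/2) : ℝ)))
    (μ := volume) (Metric.ball_mem_nhds m hε0)
    (Filter.Eventually.of_forall fun x =>
      (measurable_f1 x).aestronglyMeasurable)
    (intervalIntegrable_f1 hm)
    ((measurable_f2 m).aestronglyMeasurable)
    ?_ ?_ ?_
  · exact key.2
  · refine Filter.Eventually.of_forall fun t ht x hx => ?_
    rw [Set.uIoc_of_le (by norm_num : (0:ℝ) ≤ 1)] at ht
    have hxb := ball_lt_one hm hx
    have huδ := u_ge hb1 hxb ht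
    have hu : 0 < 1 - x * t ^ 2 := lt_of_lt_of_le hδ0 huδ
    have h1 : 3 * t ^ 4 / 4 ≤ 3/4 := by nlinarith [pow_le_one₀ ht.1.le ht.2 (n := 4)]
    show ‖f2 x t‖ ≤ w t * (3/4 * (min 1 (1 - (1 + m)/2)) ^ (-(5/2) : ℝ))
    unfold f2
    rw [Real.norm_eq_abs, abs_of_nonneg (mul_nonneg (w_nonneg t)
      (mul_nonneg (by positivity) (Real.rpow_nonneg hu.le _)))]
    refine mul_le_mul_of_nonneg_left ?_ (w_nonneg t)
    exact mul_le_mul h1 (Real.rpow_le_rpow_of_nonpos hδ0 huδ (by norm_num))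
      (Real.rpow_nonneg hu.le _) (by norm_num)
  · exact intervalIntegrable_w.mul_const _
  · refine Filter.Eventually.of_forall fun t ht x hx => ?_
    rw [Set.uIoc_of_le (by norm_num : (0:ℝ) ≤ 1)] at ht
    have hxb := ball_lt_one hm hx
    have hu : 0 < 1 - x * t ^ 2 :=
      lt_of_lt_of_le hδ0 (u_ge hb1 hxb ht)
    exact hasDerivAt_f1 hu

lemma u_pos' {x ζ : ℝ} (hx : x < 1) (hζ : ζ ∈ Set.Icc (0:ℝ) 1) :
    0 < 1 - x * ζ ^ 2 := by
  rcases eq_or_lt_of_le hζ.1 with h | h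
  · simp [← h]
  · exact u_pos hx ⟨h, hζ.2⟩

lemma quad_nonneg {m : ℝ} (hm : m < 1) (s : ℝ) :
    0 ≤ s ^ 2 * A m - 2 * s * B m + C m / 3 := by
  have h0 := intervalIntegrable_f0 hm
  have h1 := intervalIntegrable_f1 hm
  have h2 := intervalIntegrable_f2 hm
  have heq : s ^ 2 * A m - 2 * s * B m + C m / 3
      = ∫ ζ in (0:ℝ)..1, (s ^ 2 * f0 m ζ - 2 * s * f1 m ζ + f2 m ζ / 3) := by
    rw [intervalIntegral.integral_add ((h0.const_mul _).sub (h1.const_mul _)) (h2.div_const 3),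
      intervalIntegral.integral_sub (h0.const_mul _) (h1.const_mul _),
      intervalIntegral.integral_const_mul, intervalIntegral.integral_const_mul,
      intervalIntegral.integral_div]
    rfl
  rw [heq]
  apply intervalIntegral.integral_nonneg (by norm_num)
  intro ζ hζ
  have hu : 0 < 1 - m * ζ ^ 2 := u_pos' hm hζ
  set u := 1 - m * ζ ^ 2 with hu_def
  have hp2 : u ^ (-(1/2) : ℝ) = u ^ (-(1/4) : ℝ) * u ^ (-(1/4) : ℝ) := by
    rw [← Real.rpow_add hu]; norm_num
  have hpq : u ^ (-(3/2) : ℝ) = u ^ (-(1/4) : ℝ) * u ^ (-(5/4) : ℝ) := by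
    rw [← Real.rpow_add hu]; norm_num
  have hq2 : u ^ (-(5/2) : ℝ) = u ^ (-(5/4) : ℝ) * u ^ (-(5/4) : ℝ) := by
    rw [← Real.rpow_add hu]; norm_num
  have key : s ^ 2 * f0 m ζ - 2 * s * f1 m ζ + f2 m ζ / 3
      = w ζ * (s * u ^ (-(1/4) : ℝ) - ζ ^ 2 / 2 * u ^ (-(5/4) : ℝ)) ^ 2 := by
    unfold f0 f1 f2
    rw [← hu_def, hp2, hpq, hq2]; ring
  rw [key]
  exact mul_nonneg (w_nonneg ζ) (sq_nonneg _)

lemma B_sq_lt {m : ℝ} (hm : m < 1) : B m * B m < C m * A m := by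
  have hA := A_pos hm
  have hC := C_pos hm
  have hd := quad_nonneg hm (B m / A m)
  have e1 : (B m / A m) ^ 2 * A m = B m ^ 2 / A m := by
    field_simp
  have e2 : 2 * (B m / A m) * B m = 2 * (B m ^ 2 / A m) := by
    field_simp
  rw [e1, e2] at hd
  have h3 : B m ^ 2 / A m ≤ C m / 3 := by linarith
  have h4 : B m ^ 2 ≤ C m / 3 * A m := (div_le_iff₀ hA).mp h3
  nlinarith [mul_pos hC hA]

end EllK

/-- The complete elliptic integral of the first kind,
`K(m) = ∫₀¹ dζ / √((1-ζ²)(1-mζ²))`, defined for `m < 1`. -/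
noncomputable def ellipticK (m : ℝ) : ℝ :=
  ∫ ζ in (0:ℝ)..1, 1 / Real.sqrt ((1 - ζ ^ 2) * (1 - m * ζ ^ 2))

/-- For every `m < 1`, `(ln K)''(m) > 0`, i.e. `ln K` is strictly convex on `(-∞, 1)`. -/
theorem log_ellipticK_second_deriv_pos (m : ℝ) (hm : m < 1) :
    0 < deriv (deriv (fun x : ℝ => Real.log (ellipticK x))) m := by
  have hKA : ∀ x < (1:ℝ), ellipticK x = EllK.A x := by
    intro x hx
    unfold ellipticK EllK.A
    apply intervalIntegral.integral_congr
    intro ζ hζ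
    rw [Set.uIcc_of_le (by norm_num : (0:ℝ) ≤ 1)] at hζ
    have h1 : 0 ≤ 1 - ζ ^ 2 := by nlinarith [hζ.1, hζ.2]
    have h2 : 0 < 1 - x * ζ ^ 2 := EllK.u_pos' hx hζ
    unfold EllK.f0 EllK.w
    show 1 / Real.sqrt ((1 - ζ ^ 2) * (1 - x * ζ ^ 2)) = _
    rw [Real.sqrt_mul h1, one_div, mul_inv]
    congr 1
    rw [Real.sqrt_eq_rpow, ← Real.rpow_neg h2.le]
  have hL : ∀ x < (1:ℝ), deriv (fun y : ℝ => Real.log (ellipticK y)) x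
      = EllK.B x / EllK.A x := by
    intro x hx
    have hEv : (fun y : ℝ => Real.log (ellipticK y)) =ᶠ[nhds x]
        fun y => Real.log (EllK.A y) := by
      filter_upwards [Iio_mem_nhds hx] with y hy
      rw [hKA y hy]
    rw [hEv.deriv_eq]
    exact (((EllK.hasDerivAt_A hx).log (EllK.A_pos hx).ne')).deriv
  have hEv2 : deriv (fun y : ℝ => Real.log (ellipticK y)) =ᶠ[nhds m]
      fun x => EllK.B x / EllK.A x := by
    filter_upwards [Iio_mem_nhds hm] with y hy
    exact hL y hy
  rw [hEv2.deriv_eq]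
  have hAm := EllK.A_pos hm
  have h := (EllK.hasDerivAt_B hm).div (EllK.hasDerivAt_A hm) hAm.ne'
  rw [show deriv (fun x => EllK.B x / EllK.A x) m = _ from h.deriv]
  have := EllK.B_sq_lt hm
  have h2 : 0 < EllK.C m * EllK.A m - EllK.B m * EllK.B m := by linarith
  positivity
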